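/- Let R be a commutative ring. Then the clique number of EG(R) equals 2 if and only if the chromatic number of EG(R) equals 2. -/

import Mathlib

/-- An ideal is essential if it intersects every nonzero ideal nontrivially. -/
def IsEssentialIdeal (R : Type*) [CommRing R] (E : Ideal R) : Prop :=
  ∀ J : Ideal R, J ≠ ⊥ → E ⊓ J ≠ ⊥

/-- Vertices of the essential annihilating-ideal graph: nonzero ideals with
nonzero annihilator. -/
def AnnVertex (R : Type*) [CommRing R] : Type _ :=
  {I : Ideal R // I ≠ ⊥ ∧ Submodule.annihilator I ≠ ⊥}

/-- The essential annihilating-ideal graph `EG(R)`. -/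
def EG (R : Type*) [CommRing R] : SimpleGraph (AnnVertex R) where
  Adj I J := I ≠ J ∧ IsEssentialIdeal R (Submodule.annihilator (I.1 * J.1))
  symm := by
    constructor
    intro I J h
    refine ⟨h.1.symm, ?_⟩
    rw [mul_comm]
    exact h.2
  loopless := by constructor; intro I h; exact h.1 rfl

open SimpleGraph

section Aux

variable {R : Type*} [CommRing R]

lemma essential_top : IsEssentialIdeal R ⊤ := fun J hJ => by simpa using hJ

lemma essential_mono {E F : Ideal R} (hEF : E ≤ F) (hE : IsEssentialIdeal R E) :
    IsEssentialIdeal R F := fun J hJ h =>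
  hE J hJ (eq_bot_mono (inf_le_inf_right J hEF) h)

lemma essential_ne_bot {E : Ideal R} (hE : IsEssentialIdeal R E) {J : Ideal R} (hJ : J ≠ ⊥) :
    E ≠ ⊥ := by
  intro h
  exact hE J hJ (by simp [h])

lemma le_annihilator_of_mul_eq_bot {I J : Ideal R} (h : I * J = ⊥) :
    I ≤ Submodule.annihilator J := by
  intro r hr
  rw [Submodule.mem_annihilator]
  intro n hn
  have : r * n ∈ I * J := Ideal.mul_mem_mul hr hn
  rw [h] at this
  simpa using this

/-- From triangle-freeness of `EG R`: there are no three distinct nonzero ideals with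
pairwise zero products. -/
lemma no_three_orthogonal (hT : (EG R).CliqueFree 3)
    (a b c : Ideal R) (ha : a ≠ ⊥) (hb : b ≠ ⊥) (hc : c ≠ ⊥)
    (hab : a ≠ b) (hac : a ≠ c) (hbc : b ≠ c)
    (hab0 : a * b = ⊥) (hac0 : a * c = ⊥) (hbc0 : b * c = ⊥) : False := by
  classical
  have hAa : Submodule.annihilator a ≠ ⊥ := by
    intro h
    exact hb (le_bot_iff.mp (h ▸ le_annihilator_of_mul_eq_bot (by rw [mul_comm]; exact hab0)))
  have hAb : Submodule.annihilator b ≠ ⊥ := by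
    intro h
    exact ha (le_bot_iff.mp (h ▸ le_annihilator_of_mul_eq_bot hab0))
  have hAc : Submodule.annihilator c ≠ ⊥ := by
    intro h
    exact ha (le_bot_iff.mp (h ▸ le_annihilator_of_mul_eq_bot hac0))
  let va : AnnVertex R := ⟨a, ha, hAa⟩
  let vb : AnnVertex R := ⟨b, hb, hAb⟩
  let vc : AnnVertex R := ⟨c, hc, hAc⟩
  have adjab : (EG R).Adj va vb := by
    refine ⟨fun h => hab (congrArg Subtype.val h), ?_⟩
    show IsEssentialIdeal R (Submodule.annihilator (a * b))
    rw [hab0, Submodule.annihilator_bot]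
    exact essential_top
  have adjac : (EG R).Adj va vc := by
    refine ⟨fun h => hac (congrArg Subtype.val h), ?_⟩
    show IsEssentialIdeal R (Submodule.annihilator (a * c))
    rw [hac0, Submodule.annihilator_bot]
    exact essential_top
  have adjbc : (EG R).Adj vb vc := by
    refine ⟨fun h => hbc (congrArg Subtype.val h), ?_⟩
    show IsEssentialIdeal R (Submodule.annihilator (b * c))
    rw [hbc0, Submodule.annihilator_bot]
    exact essential_top
  exact hT {va, vb, vc} (is3Clique_triple_iff.mpr ⟨adjab, adjac, adjbc⟩)

/-- value of a cyclic sequence at a successor index, mod n. -/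
private lemma seq_mod_succ {n : ℕ} (x : ℕ → Ideal R) (hc : x n = x 0)
    {j : ℕ} (hj : j < n) : x ((j + 1) % n) = x (j + 1) := by
  rcases Nat.lt_or_ge (j + 1) n with h | h
  · rw [Nat.mod_eq_of_lt h]
  · have hjn : j + 1 = n := by omega
    rw [hjn, Nat.mod_self, ← hjn] at *
    rw [hjn]
    exact hc.symm

/-- Rotating a closed zero-product walk. -/
private lemma rot_valid {n : ℕ} (hn : 0 < n) (k : ℕ) (x : ℕ → Ideal R)
    (h0 : ∀ i < n, x i ≠ ⊥) (h1 : ∀ i < n, x i * x (i + 1) = ⊥)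
    (h2 : ∀ i < n, x i ≠ x (i + 1)) (hc : x n = x 0) :
    (∀ i < n, x ((i + k) % n) ≠ ⊥) ∧
    (∀ i < n, x ((i + k) % n) * x ((i + 1 + k) % n) = ⊥) ∧
    (∀ i < n, x ((i + k) % n) ≠ x ((i + 1 + k) % n)) ∧
    x ((n + k) % n) = x ((0 + k) % n) := by
  have hsucc : ∀ i : ℕ, x ((i + 1 + k) % n) = x ((i + k) % n + 1) := by
    intro i
    have h1' : (i + 1 + k) = (i + k) + 1 := by omega
    rw [h1', ← Nat.mod_add_mod]
    exact seq_mod_succ x hc (Nat.mod_lt _ hn)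
  refine ⟨fun i _ => h0 _ (Nat.mod_lt _ hn), fun i _ => ?_, fun i _ => ?_, ?_⟩
  · rw [hsucc]; exact h1 _ (Nat.mod_lt _ hn)
  · rw [hsucc]; exact h2 _ (Nat.mod_lt _ hn)
  · rw [Nat.add_mod_left, Nat.zero_add]

/-- The key combinatorial lemma: if there are no three distinct nonzero pairwise-orthogonal
ideals, then there is no odd closed walk of nonzero ideals with consecutive products zero
and consecutive terms distinct. -/
private lemma no_odd_closed_seq
    (P3 : ∀ a b c : Ideal R, a ≠ ⊥ → b ≠ ⊥ → c ≠ ⊥ → a ≠ b → a ≠ c → b ≠ c →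
      a * b = ⊥ → a * c = ⊥ → b * c = ⊥ → False) :
    ∀ n, Odd n → ∀ x : ℕ → Ideal R, (∀ i < n, x i ≠ ⊥) →
      (∀ i < n, x i * x (i + 1) = ⊥) → (∀ i < n, x i ≠ x (i + 1)) → x n = x 0 → False := by
  intro n
  induction n using Nat.strong_induction_on with
  | _ n ih =>
    intro hodd x h0 h1 h2 hc
    obtain ⟨m, hm⟩ := hodd
    rcases Nat.lt_or_ge n 5 with hlt | hge
    · have : n = 1 ∨ n = 3 := by omega
      rcases this with h | h
      · subst h
        exact h2 0 (by norm_num) hc.symm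
      · subst h
        refine P3 (x 0) (x 1) (x 2) (h0 0 (by norm_num)) (h0 1 (by norm_num))
          (h0 2 (by norm_num)) (h2 0 (by norm_num)) ?_ (h2 1 (by norm_num))
          (h1 0 (by norm_num)) ?_ (h1 1 (by norm_num))
      
        · intro h
          exact h2 2 (by norm_num) (by rw [hc]; exact h.symm)
        · have := h1 2 (by norm_num)
          rw [hc] at this
          rw [mul_comm] at this
          exact this
    -- n ≥ 5
    have hodd' : Odd (n - 2) := ⟨m - 1, by omega⟩
    -- The key step: a valid odd closed walk whose 0th and 2nd terms have zero product
    -- is impossible.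
    have key : ∀ y : ℕ → Ideal R, (∀ i < n, y i ≠ ⊥) → (∀ i < n, y i * y (i + 1) = ⊥) →
        (∀ i < n, y i ≠ y (i + 1)) → y n = y 0 → y 0 * y 2 = ⊥ → False := by
      intro y k0 k1 k2 kc k02
      by_cases he : y 0 = y 2
      · -- drop the first two vertices
        refine ih (n - 2) (by omega) hodd' (fun i => y (i + 2)) (fun i hi => k0 _ (by omega))
          (fun i hi => ?_) (fun i hi => ?_) ?_
        · have := k1 (i + 2) (by omega)
          rwa [show i + 2 + 1 = i + 1 + 2 by omega] at this
        · have := k2 (i + 2) (by omega)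
          rwa [show i + 2 + 1 = i + 1 + 2 by omega] at this
        · show y (n - 2 + 2) = y 2
          rw [show n - 2 + 2 = n by omega, kc, he]
      · exact P3 (y 0) (y 1) (y 2) (k0 0 (by omega)) (k0 1 (by omega)) (k0 2 (by omega))
          (k2 0 (by omega)) he (k2 1 (by omega)) (k1 0 (by omega)) k02 (k1 1 (by omega))
    by_cases hM0 : x 0 * x 2 = ⊥
    · exact key x h0 h1 h2 hc hM0
    have hM1 : (x 0 * x 2) * x 1 = ⊥ := by
      rw [mul_right_comm, h1 0 (by omega), Ideal.bot_mul]
    by_cases hM3 : x 0 * x 2 = x 3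
    · -- rotate by 1 and apply key
      obtain ⟨r0, r1, r2, rc⟩ := rot_valid (show 0 < n by omega) 1 x h0 h1 h2 hc
      refine key (fun i => x ((i + 1) % n)) r0 r1 r2 rc ?_
      show x (1 % n) * x ((2 + 1) % n) = ⊥
      rw [Nat.mod_eq_of_lt (by omega), Nat.mod_eq_of_lt (by omega)]
      rw [← hM3, mul_comm (x 1)]
      exact hM1
    by_cases hMn : x 0 * x 2 = x (n - 1)
    · -- rotate by n - 1 and apply key
      obtain ⟨r0, r1, r2, rc⟩ := rot_valid (show 0 < n by omega) (n - 1) x h0 h1 h2 hc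
      refine key (fun i => x ((i + (n - 1)) % n)) r0 r1 r2 rc ?_
      show x ((0 + (n - 1)) % n) * x ((2 + (n - 1)) % n) = ⊥
      rw [Nat.zero_add, Nat.mod_eq_of_lt (by omega),
        show (2 + (n - 1)) = n + 1 by omega, Nat.add_mod_left, Nat.mod_eq_of_lt (by omega)]
      rw [← hMn]
      exact hM1
    -- main replacement step
    refine ih (n - 2) (by omega) hodd'
      (fun i => if i = 0 ∨ i = n - 2 then x 0 * x 2 else x (i + 2)) ?_ ?_ ?_ ?_
    · intro i hi
      show (if i = 0 ∨ i = n - 2 then x 0 * x 2 else x (i + 2)) ≠ ⊥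
      by_cases h : i = 0
      · rw [if_pos (Or.inl h)]
        exact hM0
      · rw [if_neg (by omega)]
        exact h0 (i + 2) (by omega)
    · intro i hi
      show (if i = 0 ∨ i = n - 2 then x 0 * x 2 else x (i + 2)) *
        (if i + 1 = 0 ∨ i + 1 = n - 2 then x 0 * x 2 else x (i + 1 + 2)) = ⊥
      by_cases h : i = 0
      · subst h
        rw [if_pos (Or.inl rfl), if_neg (by omega)]
        show (x 0 * x 2) * x 3 = ⊥
        rw [mul_assoc, h1 2 (by omega), Ideal.mul_bot]
      · by_cases h' : i = n - 3
        · subst h'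
          rw [if_neg (by omega), if_pos (Or.inr (by omega))]
          show x (n - 3 + 2) * (x 0 * x 2) = ⊥
          rw [show n - 3 + 2 = n - 1 by omega, ← mul_assoc]
          have hx : x (n - 1) * x 0 = ⊥ := by
            have := h1 (n - 1) (by omega)
            rwa [show n - 1 + 1 = n by omega, hc] at this
          rw [hx, Ideal.bot_mul]
        · rw [if_neg (by omega), if_neg (by omega)]
          have := h1 (i + 2) (by omega)
          rwa [show i + 2 + 1 = i + 1 + 2 by omega] at this
    · intro i hi
      show (if i = 0 ∨ i = n - 2 then x 0 * x 2 else x (i + 2)) ≠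
        (if i + 1 = 0 ∨ i + 1 = n - 2 then x 0 * x 2 else x (i + 1 + 2))
      by_cases h : i = 0
      · subst h
        rw [if_pos (Or.inl rfl), if_neg (by omega)]
        exact hM3
      · by_cases h' : i = n - 3
        · subst h'
          rw [if_neg (by omega), if_pos (Or.inr (by omega))]
          rw [show n - 3 + 2 = n - 1 by omega]
          exact fun hh => hMn hh.symm
        · rw [if_neg (by omega), if_neg (by omega)]
          have := h2 (i + 2) (by omega)
          rwa [show i + 2 + 1 = i + 1 + 2 by omega] at this
    · show (if n - 2 = 0 ∨ n - 2 = n - 2 then x 0 * x 2 else x (n - 2 + 2)) =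
        (if (0 : ℕ) = 0 ∨ (0 : ℕ) = n - 2 then x 0 * x 2 else x (0 + 2))
      rw [if_pos (Or.inr rfl), if_pos (Or.inl rfl)]

/-- If no vertex of `EG R` has essential annihilator, then adjacency forces the product
of the two ideals to be zero. -/
lemma EG_adj_mul_bot
    (hNE : ∀ v : AnnVertex R, ¬ IsEssentialIdeal R (Submodule.annihilator v.1))
    {I J : AnnVertex R} (h : (EG R).Adj I J) : I.1 * J.1 = ⊥ := by
  by_contra hne
  have hE : IsEssentialIdeal R (Submodule.annihilator (I.1 * J.1)) := h.2
  have hA : Submodule.annihilator (I.1 * J.1) ≠ ⊥ := essential_ne_bot hE hne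
  exact hNE ⟨I.1 * J.1, hne, hA⟩ hE

/-- In the case where no vertex has essential annihilator, `EG R` has no odd closed walk. -/
lemma EG_no_odd_walk (hT : (EG R).CliqueFree 3)
    (hNE : ∀ v : AnnVertex R, ¬ IsEssentialIdeal R (Submodule.annihilator v.1)) :
    ∀ (v : AnnVertex R) (w : (EG R).Walk v v), ¬ Odd w.length := by
  intro v w hodd
  refine no_odd_closed_seq (fun a b c => no_three_orthogonal hT a b c) w.length hodd
    (fun i => (w.getVert i).1) (fun i _ => (w.getVert i).2.1) ?_ ?_ ?_
  · intro i hi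
    exact EG_adj_mul_bot hNE (w.adj_getVert_succ hi)
  · intro i hi hEq
    exact (w.adj_getVert_succ hi).1 (Subtype.ext hEq)
  · show (w.getVert w.length).1 = (w.getVert 0).1
    rw [w.getVert_length, w.getVert_zero]

/-- A graph with no odd closed walk is 2-colorable. -/
lemma colorable_two_of_no_odd_closed_walk {V : Type*} (G : SimpleGraph V)
    (h : ∀ (v : V) (w : G.Walk v v), ¬ Odd w.length) : G.Colorable 2 := by
  classical
  have hreach : ∀ w : V, G.Reachable (Quot.out (G.connectedComponentMk w)) w := fun w =>
    SimpleGraph.ConnectedComponent.exact (Quot.out_eq _)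
  have C : G.Coloring Bool := by
    refine SimpleGraph.Coloring.mk
      (fun v => decide (∃ w : G.Walk (Quot.out (G.connectedComponentMk v)) v, Odd w.length)) ?_
    intro u v hadj
    have hcomp : G.connectedComponentMk u = G.connectedComponentMk v :=
      SimpleGraph.ConnectedComponent.sound hadj.reachable
    have hout : Quot.out (G.connectedComponentMk v) = Quot.out (G.connectedComponentMk u) := by
      rw [hcomp]
    have claim1 : ¬ ((∃ w : G.Walk (Quot.out (G.connectedComponentMk u)) u, Odd w.length) ∧
        (∃ w : G.Walk (Quot.out (G.connectedComponentMk v)) v, Odd w.length)) := by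
      rintro ⟨⟨w1, hw1⟩, ⟨w2, hw2⟩⟩
      obtain ⟨k1, hk1⟩ := hw1
      obtain ⟨k2, hk2⟩ := hw2
      refine h _ (w1.append ((SimpleGraph.Walk.cons hadj SimpleGraph.Walk.nil).append
          ((w2.copy hout rfl).reverse))) ⟨k1 + k2 + 1, ?_⟩
      simp only [SimpleGraph.Walk.length_append, SimpleGraph.Walk.length_cons,
        SimpleGraph.Walk.length_nil, SimpleGraph.Walk.length_reverse,
        SimpleGraph.Walk.length_copy]
      omega
    have claim2 : (∃ w : G.Walk (Quot.out (G.connectedComponentMk u)) u, Odd w.length) ∨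
        (∃ w : G.Walk (Quot.out (G.connectedComponentMk v)) v, Odd w.length) := by
      obtain ⟨w0⟩ := hreach u
      by_cases hpar : Odd w0.length
      · exact Or.inl ⟨w0, hpar⟩
      · refine Or.inr ⟨(w0.append (SimpleGraph.Walk.cons hadj SimpleGraph.Walk.nil)).copy
          hout.symm rfl, ?_⟩
        rw [SimpleGraph.Walk.length_copy, SimpleGraph.Walk.length_append]
        rw [Nat.not_odd_iff_even] at hpar
        obtain ⟨k, hk⟩ := hpar
        refine ⟨k, ?_⟩
        simp only [SimpleGraph.Walk.length_cons, SimpleGraph.Walk.length_nil]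
        omega
    by_cases hu : ∃ w : G.Walk (Quot.out (G.connectedComponentMk u)) u, Odd w.length
    · by_cases hv : ∃ w : G.Walk (Quot.out (G.connectedComponentMk v)) v, Odd w.length
      · exact (claim1 ⟨hu, hv⟩).elim
      · simp [hu, hv]
    · by_cases hv : ∃ w : G.Walk (Quot.out (G.connectedComponentMk v)) v, Odd w.length
      · simp [hu, hv]
      · exact ((claim2.resolve_left hu).elim (fun w hw => hv ⟨w, hw⟩) |>.elim)
  simpa using C.colorable

/-- Star coloring in the case some vertex has essential annihilator. -/
lemma colorable_two_of_essential (hT : (EG R).CliqueFree 3)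
    (v₀ : AnnVertex R) (hv₀ : IsEssentialIdeal R (Submodule.annihilator v₀.1)) :
    (EG R).Colorable 2 := by
  classical
  have hadj : ∀ u : AnnVertex R, u ≠ v₀ → (EG R).Adj v₀ u := by
    intro u hu
    refine ⟨fun h => hu h.symm, ?_⟩
    exact essential_mono (Submodule.annihilator_mono Ideal.mul_le_left) hv₀
  have C : (EG R).Coloring Bool := by
    refine SimpleGraph.Coloring.mk (fun v => decide (v = v₀)) ?_
    intro u v huv
    by_cases hu : u = v₀ <;> by_cases hv : v = v₀
    · exact absurd (hu.trans hv.symm) huv.ne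
    · simp [hu, hv]
    · simp [hu, hv]
    · exact ((hT {v₀, u, v} (is3Clique_triple_iff.mpr ⟨hadj u hu, hadj v hv, huv⟩)).elim)
  simpa using C.colorable

/-- Triangle-free implies 2-colorable for `EG R`. -/
lemma EG_colorable_two (hT : (EG R).CliqueFree 3) : (EG R).Colorable 2 := by
  by_cases hE : ∃ v : AnnVertex R, IsEssentialIdeal R (Submodule.annihilator v.1)
  · obtain ⟨v₀, hv₀⟩ := hE
    exact colorable_two_of_essential hT v₀ hv₀
  · push_neg at hE
    exact colorable_two_of_no_odd_closed_walk _ (EG_no_odd_walk hT hE)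

lemma not_colorable_one_of_adj {V : Type*} {G : SimpleGraph V} {u v : V} (h : G.Adj u v) :
    ¬ G.Colorable 1 := by
  rintro ⟨C⟩
  exact C.valid h (Subsingleton.elim _ _)

lemma exists_adj_of_not_colorable_one {V : Type*} {G : SimpleGraph V}
    (h : ¬ G.Colorable 1) : ∃ u v, G.Adj u v := by
  by_contra hno
  push_neg at hno
  exact h ⟨SimpleGraph.Coloring.mk (fun _ => 0) (fun {u v} huv => absurd huv (hno u v))⟩

lemma isNClique_pair {V : Type*} [DecidableEq V] {G : SimpleGraph V} {u v : V} (h : G.Adj u v) :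
    G.IsNClique 2 {u, v} := by
  constructor
  · intro a ha b hb hab
    simp only [Finset.coe_insert, Set.mem_insert_iff, Finset.coe_singleton,
      Set.mem_singleton_iff] at ha hb
    rcases ha with rfl | rfl <;> rcases hb with rfl | rfl
    · exact absurd rfl hab
    · exact h
    · exact h.symm
    · exact absurd rfl hab
  · rw [Finset.card_insert_of_notMem (by simp [h.ne]), Finset.card_singleton]

end Aux

theorem cliqueNum_eq_two_iff_chromaticNumber_eq_two {R : Type*} [CommRing R] :
    (EG R).cliqueNum = 2 ↔ (EG R).chromaticNumber = 2 := by
  classical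
  constructor
  · intro hω
    -- the set of clique sizes is bounded above
    have hbdd : BddAbove {n | ∃ s, (EG R).IsNClique n s} := by
      by_contra hnb
      rw [SimpleGraph.cliqueNum, csSup_of_not_bddAbove hnb, csSup_empty] at hω
      exact (by norm_num : (⊥ : ℕ) ≠ 2) hω
    have hmem : (2 : ℕ) ∈ {n | ∃ s, (EG R).IsNClique n s} := by
      rw [← hω]
      exact Nat.sSup_mem ⟨0, ⟨∅, isNClique_empty.mpr rfl⟩⟩ hbdd
    obtain ⟨s, hs⟩ := hmem
    -- extract an edge
    obtain ⟨u, v, huv, hsuv⟩ := Finset.card_eq_two.mp hs.card_eq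
    have hadj : (EG R).Adj u v := hs.isClique (by simp [hsuv]) (by simp [hsuv]) huv
    -- triangle-free
    have hT : (EG R).CliqueFree 3 := by
      intro t ht
      have h3 : (3 : ℕ) ≤ (EG R).cliqueNum := le_csSup hbdd ⟨t, ht⟩
      omega
    have hcol : (EG R).Colorable 2 := EG_colorable_two hT
    have h1 : ¬ (EG R).Colorable 1 := not_colorable_one_of_adj hadj
    have hle : (EG R).chromaticNumber ≤ 2 := by
      have := hcol.chromaticNumber_le
      exact_mod_cast this
    have hge : (2 : ℕ∞) ≤ (EG R).chromaticNumber := by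
      have hnot : ¬ (EG R).chromaticNumber ≤ (1 : ℕ) :=
        fun hcon => h1 (SimpleGraph.chromaticNumber_le_iff_colorable.mp hcon)
      have hlt : (1 : ℕ∞) < (EG R).chromaticNumber := by
        rw [not_le] at hnot
        exact_mod_cast hnot
      have h11 := ENat.add_one_le_iff (by norm_num : (1 : ℕ∞) ≠ ⊤) |>.mpr hlt
      have h2 : (2 : ℕ∞) = 1 + 1 := by norm_num
      rw [h2]
      exact h11
    exact le_antisymm hle hge
  · intro hχ
    have hcol : (EG R).Colorable 2 := by
      apply SimpleGraph.chromaticNumber_le_iff_colorable.mp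
      rw [hχ]
      norm_num
    have h1 : ¬ (EG R).Colorable 1 := by
      intro hcon
      have := hcon.chromaticNumber_le
      rw [hχ] at this
      norm_num at this
    obtain ⟨u, v, hadj⟩ := exists_adj_of_not_colorable_one h1
    have hmem2 : (2 : ℕ) ∈ {n | ∃ s, (EG R).IsNClique n s} := ⟨{u, v}, isNClique_pair hadj⟩
    have hub : ∀ n ∈ {n | ∃ s, (EG R).IsNClique n s}, n ≤ 2 := by
      rintro n ⟨s, hns⟩
      have := hns.isClique.card_le_of_colorable hcol
      rwa [hns.card_eq] at this
    refine le_antisymm ?_ ?_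
    · exact csSup_le ⟨2, hmem2⟩ hub
    · exact le_csSup ⟨2, hub⟩ hmem2
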